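/- In the setting of the quiver presentation theorem for Gr(X), for every pair (g,h) in the congruence R^# generated by R on ℙQ, and every vertex x of Q^{(i)} (where g,h : i → j), the classes of the lifted paths π(g, ᵢx) and π(h, ᵢx) in kQ'/⟨R'⟩ are equal. -/

import Mathlib

open CategoryTheory Quiver Finsupp
open scoped Classical

noncomputable section

def pcomp {W : Type} [Quiver.{0} W] {k : Type} [Field k] {x y z : W}
    (f : Quiver.Path x y →₀ k) (g : Quiver.Path y z →₀ k) : Quiver.Path x z →₀ k :=
  f.sum fun p fp => g.sum fun q gq => Finsupp.single (p.comp q) (gq * fp)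

def pathsRel {V : Type} [Quiver.{0} V]
    (R : ∀ ⦃i j : V⦄, Quiver.Path i j → Quiver.Path i j → Prop) : HomRel (Paths V) :=
  fun {_ _} p q => R p q

def PresCat {V : Type} [Quiver.{0} V]
    (R : ∀ ⦃i j : V⦄, Quiver.Path i j → Quiver.Path i j → Prop) : Type :=
  CategoryTheory.Quotient (pathsRel R)

noncomputable instance {V : Type} [Quiver.{0} V]
    (R : ∀ ⦃i j : V⦄, Quiver.Path i j → Quiver.Path i j → Prop) : Category (PresCat R) :=
  inferInstanceAs (Category (CategoryTheory.Quotient (pathsRel R)))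

def presObj {V : Type} [Quiver.{0} V]
    (R : ∀ ⦃i j : V⦄, Quiver.Path i j → Quiver.Path i j → Prop) (i : V) : PresCat R := ⟨i⟩

variable {k : Type} [Field k] {V : Type} [Quiver.{0} V]
variable {W : V → Type} [∀ i, Quiver.{0} (W i)]

def RIdeal (Ri : ∀ (i : V) ⦃x y : W i⦄, (Quiver.Path x y →₀ k) → Prop)
    (i : V) (x y : W i) : Submodule k (Quiver.Path x y →₀ k) :=
  Submodule.span k
    {f | ∃ (x' y' : W i) (α : Quiver.Path x x') (r : Quiver.Path x' y' →₀ k)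
      (β : Quiver.Path y' y),
      Ri i r ∧ f = pcomp (Finsupp.single α 1) (pcomp r (Finsupp.single β 1))}

abbrev XH (Ri : ∀ (i : V) ⦃x y : W i⦄, (Quiver.Path x y →₀ k) → Prop)
    (i : V) (x y : W i) : Type :=
  (Quiver.Path x y →₀ k) ⧸ RIdeal Ri i x y

variable (Ri : ∀ (i : V) ⦃x y : W i⦄, (Quiver.Path x y →₀ k) → Prop)

def qcomp {i : V} {x y z : W i} (f : XH Ri i x y) (g : XH Ri i y z) :
    XH Ri i x z :=
  Submodule.Quotient.mk (pcomp (Quotient.out f) (Quotient.out g))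

variable (fobj : ∀ ⦃i j : V⦄, (i ⟶ j) → W i → W j)

def pobj {i j : V} (p : Quiver.Path i j) (x : W i) : W j :=
  Quiver.Path.rec (motive := fun b _ => W b) x (fun _ e ih => fobj e ih) p

variable (fhomQ : ∀ ⦃i j : V⦄ (a : i ⟶ j) ⦃x y : W i⦄,
  XH Ri i x y →ₗ[k] XH Ri j (fobj a x) (fobj a y))

def phomQ {i j : V} (p : Quiver.Path i j) {x y : W i} :
    XH Ri i x y →ₗ[k] XH Ri j (pobj fobj p x) (pobj fobj p y) :=
  Quiver.Path.rec
    (motive := fun b q =>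
      XH Ri i x y →ₗ[k] XH Ri b (pobj fobj q x) (pobj fobj q y))
    LinearMap.id (fun _ e ih => (fhomQ e).comp ih) p

/-- The new arrows of the quiver `Q'`. -/
inductive QArr : (Σ i : V, W i) → (Σ i : V, W i) → Type where
  | inner : ∀ {i : V} {x y : W i}, (x ⟶ y) → QArr ⟨i, x⟩ ⟨i, y⟩
  | trans : ∀ {i j : V} (a : i ⟶ j) (x : W i), QArr ⟨i, x⟩ ⟨j, fobj a x⟩

/-- Paths of the quiver `Q'`. -/
inductive QPath : (Σ i : V, W i) → (Σ i : V, W i) → Type where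
  | nil : ∀ u, QPath u u
  | cons : ∀ {u v w}, QPath u v → QArr fobj v w → QPath u w

/-- Concatenation of paths of `Q'`. -/
def qpComp {u v w : Σ i : V, W i} (p : QPath fobj u v) (q : QPath fobj v w) :
    QPath fobj u w :=
  QPath.rec (motive := fun w' _ => QPath fobj u w')
    p (fun _ a ih => QPath.cons ih a) q

/-- Convolution composition in `kQ'`. -/
def kpcomp {u v w : Σ i : V, W i}
    (f : QPath fobj u v →₀ k) (g : QPath fobj v w →₀ k) :
    QPath fobj u w →₀ k :=
  f.sum fun p fp => g.sum fun q gq => Finsupp.single (qpComp fobj p q) (gq * fp)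

/-- The embedding of paths of `Q⁽ⁱ⁾` as paths of inner arrows in `Q'`. -/
def innerPath {i : V} {x y : W i} (p : Quiver.Path x y) :
    QPath fobj ⟨i, x⟩ ⟨i, y⟩ :=
  Quiver.Path.rec (motive := fun b _ => QPath fobj ⟨i, x⟩ ⟨i, b⟩)
    (QPath.nil _) (fun _ e ih => QPath.cons ih (QArr.inner e)) p

/-- The embedding `σ⁽ⁱ⁾ : kQ⁽ⁱ⁾ → kQ'`. -/
def sigmaMap {i : V} {x y : W i} (f : Quiver.Path x y →₀ k) :
    QPath fobj ⟨i, x⟩ ⟨i, y⟩ →₀ k :=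
  Finsupp.mapDomain (innerPath fobj) f

/-- The path `π(a, ᵢx)` of transport arrows in `Q'` lifting a path `a` of `Q`. -/
def piPath {i j : V} (p : Quiver.Path i j) (x : W i) :
    QPath fobj ⟨i, x⟩ ⟨j, pobj fobj p x⟩ :=
  Quiver.Path.rec (motive := fun b q => QPath fobj ⟨i, x⟩ ⟨b, pobj fobj q x⟩)
    (QPath.nil _) (fun q e ih => QPath.cons ih (QArr.trans e (pobj fobj q x))) p

/-- Transport of a path of `Q'` along an equality of its target vertex. -/
def castQP {u : Σ i : V, W i} {j : V} {y y' : W j} (e : y = y')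
    (p : QPath fobj u ⟨j, y⟩) : QPath fobj u ⟨j, y'⟩ := by
  cases e; exact p

/-- Transport of a hom-class along equalities of objects. -/
def castXH {j : V} {u u' y y' : W j} (e : u = u') (e' : y = y')
    (f : XH Ri j u y) : XH Ri j u' y' := by
  cases e; cases e'; exact f

variable (R : ∀ ⦃i j : V⦄, Quiver.Path i j → Quiver.Path i j → Prop)
variable (lift : ∀ ⦃i j : V⦄ (a : i ⟶ j) ⦃x y : W i⦄ (α : x ⟶ y),
  Quiver.Path (fobj a x) (fobj a y) →₀ k)

/-- The relations `R' = R'₁ ∪ R'₂ ∪ R'₃` on `kQ'`. -/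
inductive RelR' : ∀ ⦃u v : Σ i : V, W i⦄, (QPath fobj u v →₀ k) → Prop where
  | r1 : ∀ {i : V} {x y : W i} (r : Quiver.Path x y →₀ k), Ri i r →
      RelR' (sigmaMap fobj r)
  | r2 : ∀ {i j : V} (g h : Quiver.Path i j), R g h → ∀ (x : W i)
      (e : pobj fobj h x = pobj fobj g x),
      RelR' (Finsupp.single (piPath fobj g x) 1
        - Finsupp.single (castQP fobj e (piPath fobj h x)) 1)
  | r3 : ∀ {i j : V} (a : i ⟶ j) {x y : W i} (α : x ⟶ y),
      RelR' (Finsupp.single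
          (QPath.cons (QPath.cons (QPath.nil ⟨i, x⟩) (QArr.inner α)) (QArr.trans a y)) 1
        - kpcomp fobj (Finsupp.single (QPath.cons (QPath.nil ⟨i, x⟩) (QArr.trans a x)) 1)
            (sigmaMap fobj (lift a α)))

/-- The ideal `⟨R'⟩` of `kQ'`. -/
def IdR' (u v : Σ i : V, W i) : Submodule k (QPath fobj u v →₀ k) :=
  Submodule.span k
    {f | ∃ (u' v' : Σ i : V, W i) (α : QPath fobj u u')
      (g : QPath fobj u' v' →₀ k) (β : QPath fobj v' v),
      RelR' Ri fobj R lift g ∧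
        f = kpcomp fobj (Finsupp.single α 1) (kpcomp fobj g (Finsupp.single β 1))}

end

noncomputable section
variable {k : Type} [Field k] {V : Type} [Quiver.{0} V]
variable {W : V → Type} [∀ i, Quiver.{0} (W i)]
variable (Ri : ∀ (i : V) ⦃x y : W i⦄, (Quiver.Path x y →₀ k) → Prop)
variable (R : ∀ ⦃i j : V⦄, Quiver.Path i j → Quiver.Path i j → Prop)
variable (fobj : ∀ ⦃i j : V⦄, (i ⟶ j) → W i → W j)
variable (fhomQ : ∀ ⦃i j : V⦄ (a : i ⟶ j) ⦃x y : W i⦄,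
  XH Ri i x y →ₗ[k] XH Ri j (fobj a x) (fobj a y))

/-- The hom-sets `I(i,j)` of the presented category `I = ⟨Q ∣ R⟩`. -/
abbrev IHom (i j : V) : Type := presObj R i ⟶ presObj R j

/-- Action of a morphism of `I` on objects (via a representative path). -/
def XobjI {i j : V} (a : IHom R i j) (x : W i) : W j := pobj fobj (Quot.out a) x

/-- Hom-modules of the Grothendieck construction:
`Gr(X)((i,x),(j,y)) = ⨁_{a ∈ I(i,j)} X(j)(X(a)x, y)`. -/
abbrev GrH (i : V) (x : W i) (j : V) (y : W j) : Type :=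
  DirectSum (IHom R i j) (fun a => XH Ri j (XobjI R fobj a x) y)

/-- The identity of `Gr(X)` at `(i,x)`. -/
def grId (i : V) (x : W i)
    (hid : XobjI R fobj (𝟙 (presObj R i)) x = x) : GrH Ri R fobj i x i x :=
  DirectSum.of (fun a => XH Ri i (XobjI R fobj a x) x) (𝟙 (presObj R i))
    (castXH Ri hid.symm rfl
      (Submodule.Quotient.mk (Finsupp.single Quiver.Path.nil 1)))

/-- Composition in `Gr(X)`: `(g ∘ f)_c = ∑_{c = b∘a} g_b · X(b)(f_a)`. -/
def grcomp
    (hX : ∀ (i j l : V) (a : IHom R i j) (b : IHom R j l) (x : W i),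
      XobjI R fobj (a ≫ b) x = XobjI R fobj b (XobjI R fobj a x))
    {i : V} {x : W i} {j : V} {y : W j} {l : V} {z : W l}
    (f : GrH Ri R fobj i x j y) (g : GrH Ri R fobj j y l z) :
    GrH Ri R fobj i x l z :=
  DFinsupp.sum f fun a fa => DFinsupp.sum g fun b gb =>
    DirectSum.of (fun c => XH Ri l (XobjI R fobj c x) z) (a ≫ b)
      (castXH Ri (hX i j l a b x).symm rfl
        (qcomp Ri (phomQ Ri fobj fhomQ (Quot.out b) fa) gb))

end


/-- The closure `R^c` of `R` under pre- and post-composition with paths. -/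
def PRc {V : Type} [Quiver.{0} V]
    (R : ∀ ⦃i j : V⦄, Quiver.Path i j → Quiver.Path i j → Prop) :
    ∀ ⦃i j : V⦄, Quiver.Path i j → Quiver.Path i j → Prop :=
  fun {i j} p q =>
    ∃ (i' j' : V) (α : Quiver.Path i i') (a b : Quiver.Path i' j')
      (β : Quiver.Path j' j),
      R a b ∧ p = (α.comp a).comp β ∧ q = (α.comp b).comp β

/-- The congruence `R^#` on `ℙQ` generated by `R`. -/
def PRsharp {V : Type} [Quiver.{0} V]
    (R : ∀ ⦃i j : V⦄, Quiver.Path i j → Quiver.Path i j → Prop) :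
    ∀ ⦃i j : V⦄, Quiver.Path i j → Quiver.Path i j → Prop :=
  fun {i j} p q => Relation.EqvGen (fun p' q' : Quiver.Path i j => PRc R p' q') p q



section Helpers

variable {k : Type} [Field k] {V : Type} [Quiver.{0} V]
variable {W : V → Type} [∀ i, Quiver.{0} (W i)]
variable (fobj : ∀ ⦃i j : V⦄, (i ⟶ j) → W i → W j)

lemma pobj_comp {i j l : V} (p : Quiver.Path i j) (q : Quiver.Path j l) (x : W i) :
    pobj fobj (p.comp q) x = pobj fobj q (pobj fobj p x) := by
  induction q with
  | nil => rfl
  | cons q e ih => exact congrArg (fobj e) ih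

lemma castQP_heq {u : Σ i : V, W i} {j : V} {y y' : W j} (e : y = y')
    (p : QPath fobj u ⟨j, y⟩) : HEq (castQP fobj e p) p := by
  cases e; rfl

lemma qpComp_castQP {u v : Σ i : V, W i} {j : V} {y y' : W j} (e : y = y')
    (p : QPath fobj u v) (q : QPath fobj v ⟨j, y⟩) :
    qpComp fobj p (castQP fobj e q) = castQP fobj e (qpComp fobj p q) := by
  cases e; rfl

lemma qpComp_assoc {u v w z : Σ i : V, W i}
    (p : QPath fobj u v) (q : QPath fobj v w) (r : QPath fobj w z) :
    qpComp fobj (qpComp fobj p q) r = qpComp fobj p (qpComp fobj q r) := by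
  induction r with
  | nil => rfl
  | cons r a ih => exact congrArg (fun t => QPath.cons t a) ih

lemma qpComp_congr {u v v' w w' : Σ i : V, W i} (ev : v = v') (ew : w = w')
    (p : QPath fobj u v) (p' : QPath fobj u v')
    (q : QPath fobj v w) (q' : QPath fobj v' w')
    (hp : HEq p p') (hq : HEq q q') :
    HEq (qpComp fobj p q) (qpComp fobj p' q') := by
  subst ev; subst ew; cases hp; cases hq; rfl

lemma heq_cons_trans {i j : V} (ar : i ⟶ j) {y y' : W i} (e : y = y')
    {u : Σ i : V, W i} (p : QPath fobj u ⟨i, y⟩) (p' : QPath fobj u ⟨i, y'⟩)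
    (hp : HEq p p') :
    HEq (QPath.cons p (QArr.trans ar y)) (QPath.cons p' (QArr.trans ar y')) := by
  cases e; cases hp; rfl

lemma heq_piPath {i j : V} (p : Quiver.Path i j) {x x' : W i} (e : x = x') :
    HEq (piPath fobj p x) (piPath fobj p x') := by
  cases e; rfl

lemma piPath_comp_heq {i j l : V} (p : Quiver.Path i j) (q : Quiver.Path j l) (x : W i) :
    HEq (piPath fobj (p.comp q) x)
      (qpComp fobj (piPath fobj p x) (piPath fobj q (pobj fobj p x))) := by
  induction q with
  | nil => rfl
  | cons q e ih =>
      exact heq_cons_trans fobj e (pobj_comp fobj p q x) _ _ ih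

lemma kpcomp_single_left {k : Type} [Field k] {u v w : Σ i : V, W i} (p : QPath fobj u v)
    (g : QPath fobj v w →₀ k) :
    kpcomp fobj (Finsupp.single p (1 : k)) g =
      Finsupp.mapDomain (qpComp fobj p) g := by
  unfold kpcomp
  rw [Finsupp.sum_single_index]
  · simp [Finsupp.mapDomain, mul_one]
  · simp

lemma kpcomp_single_right {k : Type} [Field k] {u v w : Σ i : V, W i} (f : QPath fobj u v →₀ k)
    (β : QPath fobj v w) :
    kpcomp fobj f (Finsupp.single β (1 : k)) =
      Finsupp.mapDomain (fun p => qpComp fobj p β) f := by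
  unfold kpcomp
  rw [Finsupp.mapDomain]
  congr 1
  funext p fp
  rw [Finsupp.sum_single_index] <;> simp

lemma mapDomain_sub' {k : Type} [Field k] {α β : Type*} (f : α → β) (g h : α →₀ k) :
    Finsupp.mapDomain f (g - h) = Finsupp.mapDomain f g - Finsupp.mapDomain f h :=
  map_sub (Finsupp.mapDomain.addMonoidHom f) g h

lemma pobj_eq_of_sharp
    (R : ∀ ⦃i j : V⦄, Quiver.Path i j → Quiver.Path i j → Prop)
    (hRobj : ∀ (i j : V) (g h : Quiver.Path i j), R g h → ∀ x : W i,
      pobj fobj g x = pobj fobj h x)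
    {i j : V} {g h : Quiver.Path i j} (hs : PRsharp R g h) (x : W i) :
    pobj fobj g x = pobj fobj h x := by
  induction hs with
  | rel p q hpq =>
      obtain ⟨i', j', α, a, b, β, hab, hp, hq⟩ := hpq
      subst hp; subst hq
      rw [pobj_comp, pobj_comp, pobj_comp, pobj_comp,
        hRobj _ _ a b hab (pobj fobj α x)]
  | refl p => rfl
  | symm p q _ ih => exact ih.symm
  | trans p q r _ _ ih1 ih2 => exact ih1.trans ih2

end Helpers

section Key

variable {k : Type} [Field k] {V : Type} [Quiver.{0} V]
variable {W : V → Type} [∀ i, Quiver.{0} (W i)]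

lemma stmt17_key
    (Ri : ∀ (i : V) ⦃x y : W i⦄, (Quiver.Path x y →₀ k) → Prop)
    (R : ∀ ⦃i j : V⦄, Quiver.Path i j → Quiver.Path i j → Prop)
    (fobj : ∀ ⦃i j : V⦄, (i ⟶ j) → W i → W j)
    (lift : ∀ ⦃i j : V⦄ (a : i ⟶ j) ⦃x y : W i⦄ (α : x ⟶ y),
      Quiver.Path (fobj a x) (fobj a y) →₀ k)
    (hRobj : ∀ (i j : V) (g h : Quiver.Path i j), R g h → ∀ x : W i,
      pobj fobj g x = pobj fobj h x) :
    ∀ (i j : V) (g h : Quiver.Path i j), PRsharp R g h → ∀ (x : W i) (y : W j)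
      (eg : pobj fobj g x = y) (eh : pobj fobj h x = y),
      (Submodule.Quotient.mk (Finsupp.single (castQP fobj eg (piPath fobj g x)) 1)
          : (QPath fobj ⟨i, x⟩ ⟨j, y⟩ →₀ k)
              ⧸ IdR' Ri fobj R lift ⟨i, x⟩ ⟨j, y⟩)
        = Submodule.Quotient.mk
            (Finsupp.single (castQP fobj eh (piPath fobj h x)) 1) := by
  intro i j g h hs
  induction hs with
  | rel p q hpq =>
      intro x y eg eh
      obtain ⟨i', j', α, a, b, β, hab, hp, hq⟩ := hpq
      subst hp; subst hq
      rw [Submodule.Quotient.eq]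
      apply Submodule.subset_span
      have e0 : pobj fobj b (pobj fobj α x) = pobj fobj a (pobj fobj α x) :=
        (hRobj _ _ a b hab (pobj fobj α x)).symm
      have eβ : pobj fobj β (pobj fobj a (pobj fobj α x)) = y := by
        rw [← pobj_comp fobj α a x, ← pobj_comp fobj (α.comp a) β x]; exact eg
      refine ⟨⟨i', pobj fobj α x⟩, ⟨j', pobj fobj a (pobj fobj α x)⟩, piPath fobj α x,
        Finsupp.single (piPath fobj a (pobj fobj α x)) 1
          - Finsupp.single (castQP fobj e0 (piPath fobj b (pobj fobj α x))) 1,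
        castQP fobj eβ (piPath fobj β (pobj fobj a (pobj fobj α x))),
        RelR'.r2 a b hab (pobj fobj α x) e0, ?_⟩
      rw [kpcomp_single_right, mapDomain_sub', Finsupp.mapDomain_single,
        Finsupp.mapDomain_single, kpcomp_single_left, mapDomain_sub',
        Finsupp.mapDomain_single, Finsupp.mapDomain_single]
      have hA : castQP fobj eg (piPath fobj ((α.comp a).comp β) x)
          = qpComp fobj (piPath fobj α x)
              (qpComp fobj (piPath fobj a (pobj fobj α x))
                (castQP fobj eβ (piPath fobj β (pobj fobj a (pobj fobj α x))))) := by
        rw [qpComp_castQP, qpComp_castQP, ← qpComp_assoc]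
        apply eq_of_heq
        refine HEq.trans (castQP_heq fobj eg _) ?_
        refine HEq.trans (piPath_comp_heq fobj (α.comp a) β x) ?_
        refine HEq.trans
          (qpComp_congr fobj
            (show (⟨j', pobj fobj (α.comp a) x⟩ : Σ i : V, W i)
                = ⟨j', pobj fobj a (pobj fobj α x)⟩ from by rw [pobj_comp])
            (show (⟨j, pobj fobj β (pobj fobj (α.comp a) x)⟩ : Σ i : V, W i)
                = ⟨j, pobj fobj β (pobj fobj a (pobj fobj α x))⟩ from by rw [pobj_comp])
            _ _ _ _ (piPath_comp_heq fobj α a x)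
            (heq_piPath fobj β (pobj_comp fobj α a x))) ?_
        exact (castQP_heq fobj eβ _).symm
      have hB : castQP fobj eh (piPath fobj ((α.comp b).comp β) x)
          = qpComp fobj (piPath fobj α x)
              (qpComp fobj (castQP fobj e0 (piPath fobj b (pobj fobj α x)))
                (castQP fobj eβ (piPath fobj β (pobj fobj a (pobj fobj α x))))) := by
        rw [← qpComp_assoc]
        apply eq_of_heq
        refine HEq.trans (castQP_heq fobj eh _) ?_
        refine HEq.trans (piPath_comp_heq fobj (α.comp b) β x) ?_
        refine qpComp_congr fobj
            (show (⟨j', pobj fobj (α.comp b) x⟩ : Σ i : V, W i)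
                = ⟨j', pobj fobj a (pobj fobj α x)⟩ from by rw [pobj_comp, e0])
            (show (⟨j, pobj fobj β (pobj fobj (α.comp b) x)⟩ : Σ i : V, W i)
                = ⟨j, y⟩ from by rw [pobj_comp, e0, eβ])
            _ _ _ _ ?_ ?_
        · refine HEq.trans (piPath_comp_heq fobj α b x) ?_
          exact qpComp_congr fobj rfl
            (show (⟨j', pobj fobj b (pobj fobj α x)⟩ : Σ i : V, W i)
                = ⟨j', pobj fobj a (pobj fobj α x)⟩ from by rw [e0])
            _ _ _ _ HEq.rfl (castQP_heq fobj e0 _).symm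
        · exact HEq.trans (heq_piPath fobj β ((pobj_comp fobj α b x).trans e0))
            (castQP_heq fobj eβ _).symm
      rw [hA, hB]
  | refl p =>
      intro x y eg eh
      rfl
  | symm p q _ ih =>
      intro x y eg eh
      exact (ih x y eh eg).symm
  | trans p q r h1 h2 ih1 ih2 =>
      intro x y eg eh
      have hq : pobj fobj q x = y :=
        (pobj_eq_of_sharp fobj R hRobj h1 x).symm.trans eg
      exact (ih1 x y eg hq).trans (ih2 x y hq eh)

end Key

/-- For every pair `(g,h)` in the congruence `R^#` generated by `R`
and every vertex `x` of `Q⁽ⁱ⁾`, the classes of the lifted paths `π(g, ᵢx)` and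
`π(h, ᵢx)` in `kQ'/⟨R'⟩` coincide. -/
theorem stmt17 {k : Type} [Field k] {V : Type} [Quiver.{0} V]
    {W : V → Type} [∀ i, Quiver.{0} (W i)]
    (Ri : ∀ (i : V) ⦃x y : W i⦄, (Quiver.Path x y →₀ k) → Prop)
    (R : ∀ ⦃i j : V⦄, Quiver.Path i j → Quiver.Path i j → Prop)
    (fobj : ∀ ⦃i j : V⦄, (i ⟶ j) → W i → W j)
    (lift : ∀ ⦃i j : V⦄ (a : i ⟶ j) ⦃x y : W i⦄ (α : x ⟶ y),
      Quiver.Path (fobj a x) (fobj a y) →₀ k)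
    (hRobj : ∀ (i j : V) (g h : Quiver.Path i j), R g h → ∀ x : W i,
      pobj fobj g x = pobj fobj h x) :
    ∀ (i j : V) (g h : Quiver.Path i j), PRsharp R g h → ∀ x : W i,
      ∃ e : pobj fobj h x = pobj fobj g x,
        (Submodule.Quotient.mk (Finsupp.single (piPath fobj g x) 1)
            : (QPath fobj ⟨i, x⟩ ⟨j, pobj fobj g x⟩ →₀ k)
                ⧸ IdR' Ri fobj R lift ⟨i, x⟩ ⟨j, pobj fobj g x⟩)
          = Submodule.Quotient.mk
              (Finsupp.single (castQP fobj e (piPath fobj h x)) 1) := by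
  intro i j g h hs x
  refine ⟨(pobj_eq_of_sharp fobj R hRobj hs x).symm, ?_⟩
  exact stmt17_key Ri R fobj lift hRobj i j g h hs x (pobj fobj g x) rfl
    (pobj_eq_of_sharp fobj R hRobj hs x).symm
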